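/- Let f(ξ) be a quasielliptic polynomial of degree d with respect to w with ℤ_p coefficients, and set Ξ(ξ) = Σ_{i=1}^{n} |ξ_i|_p^{d/w_i}. Then there exist positive constants A₀, A₁ such that A₀ Ξ(ξ) ≤ |f(ξ)|_p ≤ A₁ Ξ(ξ) for all ξ ∈ ℚ_pⁿ. -/

import Mathlib

open MvPolynomial

set_option maxHeartbeats 1000000

/-- `f ∈ ℤ_p[ξ₁,…,ξₙ]` is quasielliptic of degree `d` with respect to weights `w`. -/
def IsQuasielliptic (p : ℕ) [Fact p.Prime] {n : ℕ} (d : ℕ) (w : Fin n → ℕ)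
    (f : MvPolynomial (Fin n) ℤ_[p]) : Prop :=
  f.totalDegree ≠ 0 ∧ (∀ i, 0 < w i) ∧
    (∀ lam : ℚ_[p], lam ≠ 0 → ∀ ξ : Fin n → ℚ_[p],
      aeval (fun i => lam ^ (w i) * ξ i) f = lam ^ d * aeval ξ f) ∧
    (∀ ξ : Fin n → ℚ_[p], aeval ξ f = 0 ↔ ξ = 0)

/-- `Ξ(ξ) = ∑ i, |ξ_i|_p^{d/w_i}`. -/
noncomputable def Xi (p : ℕ) [Fact p.Prime] {n : ℕ} (d : ℕ) (w : Fin n → ℕ)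
    (ξ : Fin n → ℚ_[p]) : ℝ :=
  ∑ i, ‖ξ i‖ ^ ((d : ℝ) / (w i : ℝ))

/-- Evaluation of a polynomial with `ℤ_p` coefficients is continuous on `ℚ_pⁿ`. -/
lemma quasielliptic_continuous_aeval (p : ℕ) [Fact p.Prime] {n : ℕ}
    (f : MvPolynomial (Fin n) ℤ_[p]) :
    Continuous fun ξ : Fin n → ℚ_[p] => (aeval ξ f : ℚ_[p]) := by
  have h : ∀ ξ : Fin n → ℚ_[p],
      (aeval ξ f : ℚ_[p]) = eval ξ (map (algebraMap ℤ_[p] ℚ_[p]) f) := by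
    intro ξ; rw [aeval_def, eval₂_eq_eval_map]
  simp only [h]
  exact MvPolynomial.continuous_eval _

/-- For a quasielliptic `f` there are constants `A₀, A₁ > 0` with
`A₀ Ξ(ξ) ≤ |f(ξ)|_p ≤ A₁ Ξ(ξ)` for all `ξ ∈ ℚ_pⁿ`. -/
theorem quasielliptic_bounds (p : ℕ) [Fact p.Prime] {n : ℕ}
    (d : ℕ) (w : Fin n → ℕ) (f : MvPolynomial (Fin n) ℤ_[p])
    (hf : IsQuasielliptic p d w f) :
    ∃ A₀ A₁ : ℝ, 0 < A₀ ∧ 0 < A₁ ∧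
      ∀ ξ : Fin n → ℚ_[p],
        A₀ * Xi p d w ξ ≤ ‖(aeval ξ f : ℚ_[p])‖ ∧
        ‖(aeval ξ f : ℚ_[p])‖ ≤ A₁ * Xi p d w ξ := by
  classical
  obtain ⟨hdeg, hw, hhom, hzero⟩ := hf
  have hp1 : (1 : ℝ) < (p : ℝ) := by exact_mod_cast (Fact.out : p.Prime).one_lt
  have hp0 : (0 : ℝ) < (p : ℝ) := lt_trans one_pos hp1
  have hcont := quasielliptic_continuous_aeval p f
  -- `n = 0` is impossible.
  by_cases hne : IsEmpty (Fin n)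
  · exfalso
    obtain ⟨c, rfl⟩ := C_surjective (Fin n) f
    have h0 : (aeval (0 : Fin n → ℚ_[p]) (C c) : ℚ_[p]) = 0 := (hzero 0).mpr rfl
    rw [aeval_C, PadicInt.algebraMap_apply] at h0
    have hc : c = 0 := PadicInt.coe_eq_zero.mp h0
    rw [hc] at hdeg
    simp at hdeg
  haveI : Nonempty (Fin n) := not_isEmpty_iff.mp hne
  have hnpos : 0 < n := Fin.pos_iff_nonempty.mpr ‹_›
  have hnR : (0 : ℝ) < (n : ℝ) := by exact_mod_cast hnpos
  have hpq : (p : ℚ_[p]) ≠ 0 := by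
    exact_mod_cast (Nat.cast_ne_zero (R := ℚ_[p])).mpr (Fact.out : p.Prime).ne_zero
  -- `d` is positive.
  have hd : 0 < d := by
    by_contra hd0
    have hd0 : d = 0 := Nat.le_zero.mp (not_lt.mp hd0)
    set ξ1 : Fin n → ℚ_[p] := fun _ => 1 with hξ1def
    have hξ1 : ξ1 ≠ 0 := by
      intro h
      have := congrFun h (Classical.arbitrary _)
      simp [hξ1def] at this
    have hfξ1 : (aeval ξ1 f : ℚ_[p]) ≠ 0 := fun h => hξ1 ((hzero ξ1).mp h)
    have hconst : ∀ m : ℕ, (aeval (fun i => ((p : ℚ_[p]) ^ m) ^ (w i) * ξ1 i) f : ℚ_[p])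
        = aeval ξ1 f := by
      intro m
      rw [hhom ((p : ℚ_[p]) ^ m) (pow_ne_zero _ hpq) ξ1, hd0, pow_zero, one_mul]
    have htend : Filter.Tendsto (fun m : ℕ => fun i => ((p : ℚ_[p]) ^ m) ^ (w i) * ξ1 i)
        Filter.atTop (nhds 0) := by
      rw [tendsto_pi_nhds]
      intro i
      have heq : ∀ m : ℕ, ((p : ℚ_[p]) ^ m) ^ (w i) * ξ1 i = ((p : ℚ_[p]) ^ (w i)) ^ m := by
        intro m; simp [hξ1def, ← pow_mul, Nat.mul_comm]
      simp only [heq, Pi.zero_apply]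
      apply tendsto_pow_atTop_nhds_zero_of_norm_lt_one
      rw [norm_pow, Padic.norm_p]
      exact pow_lt_one₀ (by positivity) (inv_lt_one_of_one_lt₀ hp1) (hw i).ne'
    have hlim : Filter.Tendsto
        (fun m : ℕ => (aeval (fun i => ((p : ℚ_[p]) ^ m) ^ (w i) * ξ1 i) f : ℚ_[p]))
        Filter.atTop (nhds (aeval (0 : Fin n → ℚ_[p]) f)) :=
      (hcont.tendsto 0).comp htend
    have h0 : (aeval (0 : Fin n → ℚ_[p]) f : ℚ_[p]) = 0 := (hzero 0).mpr rfl
    rw [h0] at hlim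
    simp only [hconst] at hlim
    exact hfξ1 (tendsto_nhds_unique tendsto_const_nhds hlim)
  have hdR : (0 : ℝ) < (d : ℝ) := by exact_mod_cast hd
  -- the compact "sphere" K
  set K : Set (Fin n → ℚ_[p]) :=
    {η | (∀ i, ‖η i‖ ≤ 1) ∧ ∃ i, (p : ℝ) ^ (1 - (w i : ℤ)) ≤ ‖η i‖} with hKdef
  have hKclosed : IsClosed K := by
    rw [hKdef, Set.setOf_and]
    apply IsClosed.inter
    · rw [Set.setOf_forall]
      exact isClosed_iInter fun i =>
        isClosed_le ((continuous_apply i).norm) continuous_const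
    · rw [Set.setOf_exists]
      exact isClosed_iUnion_of_finite fun i =>
        isClosed_le continuous_const ((continuous_apply i).norm)
  have hKcompact : IsCompact K := by
    apply Metric.isCompact_of_isClosed_isBounded hKclosed
    apply (Metric.isBounded_closedBall (x := (0 : Fin n → ℚ_[p])) (r := 1)).subset
    intro η hη
    rw [Metric.mem_closedBall, dist_zero_right]
    exact (pi_norm_le_iff_of_nonneg zero_le_one).mpr hη.1
  have hη₁K : (fun _ => (1 : ℚ_[p])) ∈ K := by
    constructor
    · intro i; rw [norm_one]
    · refine ⟨Classical.arbitrary _, ?_⟩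
      rw [norm_one]
      apply zpow_le_one_of_nonpos₀ hp1.le
      have := hw (Classical.arbitrary _)
      omega
  obtain ⟨η₀, hη₀K, hη₀min⟩ :=
    hKcompact.exists_isMinOn ⟨_, hη₁K⟩ hcont.norm.continuousOn
  set A : ℝ := ‖(aeval η₀ f : ℚ_[p])‖ with hAdef
  have hA : 0 < A := by
    obtain ⟨i, hi⟩ := hη₀K.2
    have hi0 : η₀ i ≠ 0 := by
      intro h
      rw [h, norm_zero] at hi
      exact absurd hi (not_le.mpr (zpow_pos hp0 _))
    have hne0 : η₀ ≠ 0 := fun h => hi0 (by rw [h]; rfl)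
    have : (aeval η₀ f : ℚ_[p]) ≠ 0 := fun h => hne0 ((hzero η₀).mp h)
    rw [hAdef]
    exact norm_pos_iff.mpr this
  -- facts on K
  have hXinn : ∀ ζ : Fin n → ℚ_[p], 0 ≤ Xi p d w ζ := fun ζ =>
    Finset.sum_nonneg fun i _ => Real.rpow_nonneg (norm_nonneg _) _
  have hub : ∀ η ∈ K, ‖(aeval η f : ℚ_[p])‖ ≤ 1 := by
    intro η hη
    set η' : Fin n → ℤ_[p] := fun i => ⟨η i, hη.1 i⟩ with hη'def
    have heta : η = fun i => (Algebra.ofId ℤ_[p] ℚ_[p]) (η' i) := by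
      funext i
      simp [Algebra.ofId_apply, PadicInt.algebraMap_apply, hη'def]
      rfl
    have heval : (aeval η f : ℚ_[p]) = algebraMap ℤ_[p] ℚ_[p] (aeval η' f) := by
      conv_lhs => rw [heta]
      exact (comp_aeval_apply _ (Algebra.ofId ℤ_[p] ℚ_[p]) f).symm
    rw [heval, PadicInt.algebraMap_apply, ← PadicInt.norm_def]
    exact PadicInt.norm_le_one _
  have hXub : ∀ η ∈ K, Xi p d w η ≤ (n : ℝ) := by
    intro η hη
    calc Xi p d w η ≤ ∑ _i : Fin n, (1 : ℝ) :=
          Finset.sum_le_sum fun i _ =>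
            Real.rpow_le_one (norm_nonneg _) (hη.1 i) (by positivity)
      _ = (n : ℝ) := by simp
  have hXlb : ∀ η ∈ K, (p : ℝ) ^ (-(d : ℤ)) ≤ Xi p d w η := by
    intro η hη
    obtain ⟨i, hi⟩ := hη.2
    have hwR : (0 : ℝ) < ((w i : ℕ) : ℝ) := by exact_mod_cast hw i
    have h2 : ((p : ℝ) ^ (1 - (w i : ℤ))) ^ ((d : ℝ) / (w i : ℝ))
        ≤ ‖η i‖ ^ ((d : ℝ) / (w i : ℝ)) :=
      Real.rpow_le_rpow (by positivity) hi (by positivity)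
    have h1 : (p : ℝ) ^ (-(d : ℤ)) ≤ ‖η i‖ ^ ((d : ℝ) / (w i : ℝ)) := by
      refine le_trans ?_ h2
      rw [← Real.rpow_intCast (p : ℝ) (1 - (w i : ℤ)), ← Real.rpow_mul hp0.le,
        ← Real.rpow_intCast (p : ℝ) (-(d : ℤ)), Real.rpow_le_rpow_left_iff hp1]
      have hw1 : (1 : ℝ) ≤ ((w i : ℕ) : ℝ) := by exact_mod_cast hw i
      push_cast
      rw [← mul_div_assoc, le_div_iff₀ hwR]
      nlinarith [hdR, hw1]
    calc (p : ℝ) ^ (-(d : ℤ)) ≤ ‖η i‖ ^ ((d : ℝ) / (w i : ℝ)) := h1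
      _ ≤ Xi p d w η := by
        simp only [Xi]
        exact Finset.single_le_sum (f := fun j => ‖η j‖ ^ ((d : ℝ) / ((w j : ℕ) : ℝ)))
          (fun j _ => Real.rpow_nonneg (norm_nonneg _) _) (Finset.mem_univ i)
  -- the two constants
  refine ⟨A / n, (p : ℝ) ^ (d : ℤ), div_pos hA hnR, zpow_pos hp0 _, ?_⟩
  intro ξ
  by_cases hξ : ξ = 0
  · subst hξ
    have h0 : (aeval (0 : Fin n → ℚ_[p]) f : ℚ_[p]) = 0 := (hzero 0).mpr rfl
    have hXi0 : Xi p d w (0 : Fin n → ℚ_[p]) = 0 := by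
      simp only [Xi]
      apply Finset.sum_eq_zero
      intro i _
      rw [Pi.zero_apply, norm_zero, Real.zero_rpow]
      have hwR : (0 : ℝ) < ((w i : ℕ) : ℝ) := by exact_mod_cast hw i
      positivity
    rw [h0, hXi0, norm_zero, mul_zero, mul_zero]
    exact ⟨le_refl 0, le_refl 0⟩
  -- scale ξ into K
  have hsne : (Finset.univ.filter fun i => ξ i ≠ 0).Nonempty := by
    obtain ⟨i, hi⟩ := Function.ne_iff.mp hξ
    exact ⟨i, Finset.mem_filter.mpr ⟨Finset.mem_univ _, hi⟩⟩
  have hkex : ∃ k : ℤ, (∀ i, ξ i ≠ 0 → 0 ≤ k * (w i : ℕ) + (ξ i).valuation) ∧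
      (∃ i, ξ i ≠ 0 ∧ k * (w i : ℕ) + (ξ i).valuation ≤ ((w i : ℕ) : ℤ) - 1) := by
    refine ⟨(Finset.univ.filter fun i => ξ i ≠ 0).sup' hsne
      (fun i => ⌈(-(ξ i).valuation : ℚ) / ((w i : ℕ) : ℚ)⌉), ?_, ?_⟩
    · intro i hi
      have hmem : i ∈ Finset.univ.filter fun j => ξ j ≠ 0 :=
        Finset.mem_filter.mpr ⟨Finset.mem_univ _, hi⟩
      have hkgi := Finset.le_sup'
        (f := fun j => ⌈(-(ξ j).valuation : ℚ) / ((w j : ℕ) : ℚ)⌉) hmem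
      have hceil : (-(ξ i).valuation : ℚ) / ((w i : ℕ) : ℚ) ≤
          ((⌈(-(ξ i).valuation : ℚ) / ((w i : ℕ) : ℚ)⌉ : ℤ) : ℚ) := Int.le_ceil _
      have hwq : (0 : ℚ) < ((w i : ℕ) : ℚ) := by exact_mod_cast hw i
      have h3 := (div_le_iff₀ hwq).mp hceil
      have h4 : (-(ξ i).valuation : ℚ) ≤
          (((Finset.univ.filter fun j => ξ j ≠ 0).sup' hsne
            (fun j => ⌈(-(ξ j).valuation : ℚ) / ((w j : ℕ) : ℚ)⌉) : ℤ) : ℚ) * ((w i : ℕ) : ℚ) :=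
        le_trans h3 (mul_le_mul_of_nonneg_right (by exact_mod_cast hkgi) hwq.le)
      have h5 : -(ξ i).valuation ≤
          (Finset.univ.filter fun j => ξ j ≠ 0).sup' hsne
            (fun j => ⌈(-(ξ j).valuation : ℚ) / ((w j : ℕ) : ℚ)⌉) * ((w i : ℕ) : ℤ) := by
        exact_mod_cast h4
      omega
    · obtain ⟨i₀, hi₀mem, hki₀⟩ := Finset.exists_mem_eq_sup' hsne
        (fun i => ⌈(-(ξ i).valuation : ℚ) / ((w i : ℕ) : ℚ)⌉)
      refine ⟨i₀, (Finset.mem_filter.mp hi₀mem).2, ?_⟩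
      rw [hki₀]
      have hwq : (0 : ℚ) < ((w i₀ : ℕ) : ℚ) := by exact_mod_cast hw i₀
      have hlt : ((⌈(-(ξ i₀).valuation : ℚ) / ((w i₀ : ℕ) : ℚ)⌉ : ℤ) : ℚ) <
          (-(ξ i₀).valuation : ℚ) / ((w i₀ : ℕ) : ℚ) + 1 := Int.ceil_lt_add_one _
      have hlt2 : ((⌈(-(ξ i₀).valuation : ℚ) / ((w i₀ : ℕ) : ℚ)⌉ : ℤ) : ℚ) * ((w i₀ : ℕ) : ℚ)
          < (-(ξ i₀).valuation : ℚ) + ((w i₀ : ℕ) : ℚ) := by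
        have h6 := mul_lt_mul_of_pos_right hlt hwq
        rw [add_mul, div_mul_cancel₀ _ (ne_of_gt hwq), one_mul] at h6
        exact h6
      have hint : (⌈(-(ξ i₀).valuation : ℚ) / ((w i₀ : ℕ) : ℚ)⌉ : ℤ) * ((w i₀ : ℕ) : ℤ)
          + (ξ i₀).valuation < ((w i₀ : ℕ) : ℤ) := by
        exact_mod_cast (by linarith :
          ((⌈(-(ξ i₀).valuation : ℚ) / ((w i₀ : ℕ) : ℚ)⌉ : ℤ) : ℚ) * ((w i₀ : ℕ) : ℚ)
            + ((ξ i₀).valuation : ℚ) < ((w i₀ : ℕ) : ℚ))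
      omega
  obtain ⟨k, hk1, hk2⟩ := hkex
  set lam : ℚ_[p] := (p : ℚ_[p]) ^ k with hlamdef
  have hlamne : lam ≠ 0 := zpow_ne_zero _ hpq
  set η : Fin n → ℚ_[p] := fun i => lam ^ (w i) * ξ i with hηdef
  have hnlam : ‖lam‖ = (p : ℝ) ^ (-k) := by
    rw [hlamdef, norm_zpow, Padic.norm_p, inv_zpow, ← zpow_neg]
  have hnorm : ∀ i, ξ i ≠ 0 → ‖η i‖ = (p : ℝ) ^ (-(k * (w i) + (ξ i).valuation)) := by
    intro i hi
    show ‖lam ^ (w i) * ξ i‖ = _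
    rw [norm_mul, norm_pow, hnlam, Padic.norm_eq_zpow_neg_valuation hi,
      ← zpow_natCast ((p : ℝ) ^ (-k)), ← zpow_mul, ← zpow_add₀ (ne_of_gt hp0)]
    congr 1
    ring
  have hηK : η ∈ K := by
    constructor
    · intro i
      by_cases hi : ξ i = 0
      · show ‖lam ^ (w i) * ξ i‖ ≤ 1
        rw [hi, mul_zero, norm_zero]; exact zero_le_one
      · rw [hnorm i hi]
        apply zpow_le_one_of_nonpos₀ hp1.le
        have := hk1 i hi
        omega
    · obtain ⟨i₀, hi₀ne, hi₀le⟩ := hk2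
      refine ⟨i₀, ?_⟩
      rw [hnorm i₀ hi₀ne]
      apply zpow_le_zpow_right₀ hp1.le
      omega
  -- homogeneity relations
  have hhomη : (aeval η f : ℚ_[p]) = lam ^ d * aeval ξ f := hhom lam hlamne ξ
  set R : ℝ := ‖lam‖ with hRdef
  have hR : 0 < R := norm_pos_iff.mpr hlamne
  have hRd : 0 < R ^ d := pow_pos hR d
  have hN : ‖(aeval η f : ℚ_[p])‖ = R ^ d * ‖(aeval ξ f : ℚ_[p])‖ := by
    rw [hhomη, norm_mul, norm_pow]
  have hXiη : Xi p d w η = R ^ d * Xi p d w ξ := by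
    simp only [Xi]
    rw [Finset.mul_sum]
    apply Finset.sum_congr rfl
    intro i _
    show ‖lam ^ (w i) * ξ i‖ ^ ((d : ℝ) / (w i : ℝ)) = _
    rw [norm_mul, norm_pow,
      Real.mul_rpow (by positivity) (norm_nonneg _)]
    congr 1
    rw [← Real.rpow_natCast R (w i), ← Real.rpow_mul hR.le, ← Real.rpow_natCast R d]
    congr 1
    have hwR : ((w i : ℕ) : ℝ) ≠ 0 := by
      have : (0 : ℝ) < ((w i : ℕ) : ℝ) := by exact_mod_cast hw i
      exact ne_of_gt this
    field_simp
  have hFη : A ≤ ‖(aeval η f : ℚ_[p])‖ := hη₀min hηK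
  have h1 := hub η hηK
  have h2 := hXub η hηK
  have h3 := hXlb η hηK
  constructor
  · -- lower bound
    have key : A * Xi p d w η ≤ ‖(aeval η f : ℚ_[p])‖ * (n : ℝ) :=
      mul_le_mul hFη h2 (hXinn η) (norm_nonneg _)
    rw [hN, hXiη] at key
    have h' : R ^ d * (A * Xi p d w ξ) ≤ R ^ d * (‖(aeval ξ f : ℚ_[p])‖ * (n : ℝ)) := by
      nlinarith [key]
    have key2 := le_of_mul_le_mul_left h' hRd
    rw [div_mul_eq_mul_div, div_le_iff₀ hnR]
    linarith [key2]
  · -- upper bound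
    have h4 : (1 : ℝ) ≤ (p : ℝ) ^ (d : ℤ) * Xi p d w η := by
      calc (1 : ℝ) = (p : ℝ) ^ (d : ℤ) * (p : ℝ) ^ (-(d : ℤ)) := by
            rw [← zpow_add₀ (ne_of_gt hp0)]; simp
        _ ≤ (p : ℝ) ^ (d : ℤ) * Xi p d w η :=
            mul_le_mul_of_nonneg_left h3 (zpow_pos hp0 _).le
    have key : ‖(aeval η f : ℚ_[p])‖ ≤ (p : ℝ) ^ (d : ℤ) * Xi p d w η := le_trans h1 h4
    rw [hN, hXiη] at key
    have h' : R ^ d * ‖(aeval ξ f : ℚ_[p])‖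
        ≤ R ^ d * ((p : ℝ) ^ (d : ℤ) * Xi p d w ξ) := by
      nlinarith [key]
    exact le_of_mul_le_mul_left h' hRd
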